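/- Let Γ, Σ, Δ be finite alphabets, let f : Γ* → Σ* and g : Γ* → Δ* be monoid homomorphisms of free monoids, let R ⊆ Γ* be a regular language, and let L ⊆ Σ* be a context-free language. Then the language {g(r) | r ∈ R and f(r) ∈ L} ⊆ Δ* is context-free. -/

import Mathlib

open List

noncomputable section
open scoped Classical

/-- A transition: (source, input letter (≤1), output word, destination). -/
abbrev TTrans (Q S Δ : Type) := Q × Option S × List Δ × Q

/-- Paths in a finite labelled transition system, accumulating input and output. -/
inductive TPath {Q S Δ : Type} (tr : Finset (TTrans Q S Δ)) : Q → Q → List S → List Δ → Prop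
  | nil (p : Q) : TPath tr p p [] []
  | cons {q r : Q} {w : List S} {o : List Δ} (p : Q) (b : Option S) (out : List Δ)
      (ht : (p, b, out, q) ∈ tr) (hp : TPath tr q r w o) :
      TPath tr p r (b.toList ++ w) (out ++ o)

namespace TPath

variable {Q S Δ : Type} {tr : Finset (TTrans Q S Δ)}

lemma ttrans {p q r : Q} {w w' o o'} (h : TPath tr p q w o) (h' : TPath tr q r w' o') :
    TPath tr p r (w ++ w') (o ++ o') := by
  induction h with
  | nil => simpa using h'
  | cons p b out ht hp ih =>
      rw [List.append_assoc, List.append_assoc]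
      exact TPath.cons p b out ht (ih h')

lemma split {p q : Q} {u v : List S} {o : List Δ} (h : TPath tr p q (u ++ v) o) :
    ∃ s o₁ o₂, TPath tr p s u o₁ ∧ TPath tr s q v o₂ ∧ o = o₁ ++ o₂ := by
  generalize hw : u ++ v = w at h
  induction h generalizing u with
  | nil =>
      obtain ⟨rfl, rfl⟩ := List.append_eq_nil_iff.mp hw
      exact ⟨_, [], [], TPath.nil _, TPath.nil _, rfl⟩
  | @cons q r w o p b out ht hp ih =>
      cases u with
      | nil =>
          refine ⟨p, [], out ++ o, TPath.nil p, ?_, rfl⟩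
          rw [List.nil_append] at hw
          rw [hw]
          exact TPath.cons p b out ht hp

      | cons x u =>
          cases b with
          | none =>
              simp only [Option.toList, List.nil_append] at hw
              obtain ⟨s, o₁, o₂, h₁, h₂, rfl⟩ := ih hw
              exact ⟨s, out ++ o₁, o₂, by simpa using TPath.cons p none out ht h₁, h₂, by simp⟩
          | some y =>
              simp only [Option.toList, List.cons_append, List.singleton_append, List.cons.injEq] at hw
              obtain ⟨rfl, hw⟩ := hw
              obtain ⟨s, o₁, o₂, h₁, h₂, rfl⟩ := ih hw
              exact ⟨s, out ++ o₁, o₂, by simpa using TPath.cons p (some x) out ht h₁, h₂, by simp⟩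

lemma mem_st {st : Finset Q} (hst : ∀ t ∈ tr, t.1 ∈ st ∧ t.2.2.2 ∈ st)
    {p q : Q} {w o} (h : TPath tr p q w o) (hp : p ∈ st) : q ∈ st := by
  induction h with
  | nil => exact hp
  | cons p b out ht hp ih => exact ih ((hst _ ht).2)

end TPath
section LemmaB

variable {S Δ Q N : Type}

/-- Nonterminals of the simulating grammar. -/
abbrev NTt (Q S N : Type) : Type := Option ((Q × Symbol S N × Q) ⊕ (Q × Option S × Q))

/-- Triple nonterminal as a symbol. -/
def tri (p : Q) (X : Symbol S N) (q : Q) : Symbol Δ (NTt Q S N) :=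
  Symbol.nonterminal (some (Sum.inl (p, X, q)))

/-- Right-linear ("transducer-run") nonterminal as a symbol. -/
def wnt (p : Q) (b : Option S) (q : Q) : Symbol Δ (NTt Q S N) :=
  Symbol.nonterminal (some (Sum.inr (p, b, q)))

/-- All lists of given length with entries in `st`. -/
def stLists (st : Finset Q) : ℕ → Finset (List Q)
  | 0 => {[]}
  | n + 1 => (st ×ˢ stLists st n).image (fun pl => pl.1 :: pl.2)

lemma mem_stLists {st : Finset Q} : ∀ {n : ℕ} {l : List Q},
    l ∈ stLists st n ↔ l.length = n ∧ ∀ x ∈ l, x ∈ st := by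
  intro n
  induction n with
  | zero => intro l; simp [stLists]; rintro rfl; simp
  | succ n ih =>
      intro l
      constructor
      · intro h
        simp only [stLists, Finset.mem_image, Finset.mem_product] at h
        obtain ⟨⟨p, l'⟩, ⟨hp, hl'⟩, rfl⟩ := h
        obtain ⟨hlen, hmem⟩ := ih.mp hl'
        exact ⟨by simp [hlen], by simpa [hp] using hmem⟩
      · rintro ⟨hlen, hmem⟩
        cases l with
        | nil => simp at hlen
        | cons x l =>
            simp only [stLists, Finset.mem_image, Finset.mem_product]
            exact ⟨(x, l), ⟨⟨by simpa using hmem x (by simp),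
              ih.mpr ⟨by simpa using hlen, fun y hy => hmem y (by simp [hy])⟩⟩, rfl⟩⟩

/-- Annotate a sentential form with a sequence of states. -/
def annotate : List (Symbol S N) → Q → List Q → List (Symbol Δ (NTt Q S N))
  | [], _, _ => []
  | _ :: _, _, [] => []
  | X :: xs, p, s :: rest => tri p X s :: annotate xs s rest

/-- Last state of a state sequence started at `p`. -/
def lastSt (p : Q) (l : List Q) : Q := (p :: l).getLast (by simp)

@[simp] lemma lastSt_nil (p : Q) : lastSt p ([] : List Q) = p := rfl

@[simp] lemma lastSt_cons (p s : Q) (l : List Q) : lastSt p (s :: l) = lastSt s l := by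
  simp [lastSt, List.getLast_cons]

variable [Fintype S] (G : ContextFreeGrammar S) (st : Finset Q)
  (tr : Finset (TTrans Q S Δ)) (q0 : Q) (acc : Finset Q)

/-- The rules of the simulating grammar. -/
def bigRules : Finset (ContextFreeRule Δ (NTt Q S G.NT)) :=
  -- R1 : initial rules
  (acc.image fun qf =>
    ⟨none, [tri q0 (Symbol.nonterminal G.initial) qf]⟩)
  -- R2 : simulation of grammar rules on annotated forms
  ∪ (G.rules.biUnion fun r => (st ×ˢ stLists st r.output.length).image
      (fun pl => ⟨some (Sum.inl (pl.1, Symbol.nonterminal r.input, lastSt pl.1 pl.2)),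
        annotate r.output pl.1 pl.2⟩))
  -- R3 : bridge from annotated terminals to transducer runs
  ∪ ((st ×ˢ ((Finset.univ : Finset S) ×ˢ st)).image
      fun pxq => ⟨some (Sum.inl (pxq.1, Symbol.terminal pxq.2.1, pxq.2.2)),
        [wnt pxq.1 (some pxq.2.1) pxq.2.2]⟩)
  -- R4 : padding by silent transitions at the top
  ∪ (((tr.filter fun t => t.2.1 = none) ×ˢ st).image
      fun tq => ⟨some (Sum.inl (tq.1.1, Symbol.nonterminal G.initial, tq.2)),
        (tq.1.2.2.1.map Symbol.terminal) ++ [tri tq.1.2.2.2 (Symbol.nonterminal G.initial) tq.2]⟩)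
  -- R5a : transducer runs, silent step
  ∪ (((tr.filter fun t => t.2.1 = none) ×ˢ ((Finset.univ : Finset (Option S)) ×ˢ st)).image
      fun tbq => ⟨some (Sum.inr (tbq.1.1, tbq.2.1, tbq.2.2)),
        (tbq.1.2.2.1.map Symbol.terminal) ++ [wnt tbq.1.2.2.2 tbq.2.1 tbq.2.2]⟩)
  -- R5b : transducer runs, consuming step
  ∪ ((tr ×ˢ st).image
      fun tq => ⟨some (Sum.inr (tq.1.1, tq.1.2.1, tq.2)),
        (tq.1.2.2.1.map Symbol.terminal) ++ [wnt tq.1.2.2.2 none tq.2]⟩)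
  -- R6 : termination of transducer runs
  ∪ (st.image fun q => ⟨some (Sum.inr (q, none, q)), []⟩)

/-- The grammar simulating a transducer run on top of `G`. -/
abbrev bigGrammar : ContextFreeGrammar Δ :=
  ⟨NTt Q S G.NT, none, bigRules G st tr q0 acc⟩

end LemmaB
section Soundness

variable {S Δ Q : Type} [Fintype S] (G : ContextFreeGrammar S) (st : Finset Q)
  (tr : Finset (TTrans Q S Δ)) (q0 : Q) (acc : Finset Q)

/-- Semantics of a nonterminal of the simulating grammar. -/
def sem : NTt Q S G.NT → List Δ → Prop
  | none, o => ∃ w ∈ G.language, ∃ qf ∈ acc, TPath tr q0 qf w o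
  | some (Sum.inl (p, X, q)), o =>
      ∃ w, TPath tr p q w o ∧ G.Derives [X] (w.map Symbol.terminal)
  | some (Sum.inr (p, b, q)), o => TPath tr p q b.toList o

/-- Semantics of a symbol. -/
def semS : Symbol Δ (NTt Q S G.NT) → List Δ → Prop
  | Symbol.terminal d, o => o = [d]
  | Symbol.nonterminal A, o => sem G tr q0 acc A o

/-- Semantics of a sentential form. -/
def semL (s : List (Symbol Δ (NTt Q S G.NT))) (o : List Δ) : Prop :=
  ∃ os : List (List Δ), List.Forall₂ (semS G tr q0 acc) s os ∧ os.flatten = o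

lemma forall₂_append_split {α β : Type*} {R : α → β → Prop} :
    ∀ {l₁ l₂ : List α} {l : List β}, List.Forall₂ R (l₁ ++ l₂) l →
      ∃ u v, l = u ++ v ∧ List.Forall₂ R l₁ u ∧ List.Forall₂ R l₂ v := by
  intro l₁
  induction l₁ with
  | nil => intro l₂ l h; exact ⟨[], l, rfl, List.Forall₂.nil, h⟩
  | cons a l₁ ih =>
      intro l₂ l h
      rw [List.cons_append, List.forall₂_cons_left_iff] at h
      obtain ⟨b, l', hab, h', rfl⟩ := h
      obtain ⟨u, v, rfl, h₁, h₂⟩ := ih h'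
      exact ⟨b :: u, v, rfl, List.Forall₂.cons hab h₁, h₂⟩

lemma derives_append {T : Type} {g : ContextFreeGrammar T} {u v u' v' : List (Symbol T g.NT)}
    (h : g.Derives u v) (h' : g.Derives u' v') : g.Derives (u ++ u') (v ++ v') :=
  (h.append_right u').trans (h'.append_left v)

lemma derives_of_forall₂ {v : List (Symbol S G.NT)} {ws : List (List S)}
    (h : List.Forall₂ (fun X w => G.Derives [X] (w.map Symbol.terminal)) v ws) :
    G.Derives v ((ws.flatten).map Symbol.terminal) := by
  induction h with
  | nil => exact ContextFreeGrammar.Derives.refl []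
  | cons hab h ih =>
      rename_i a b l₁ l₂
      have : G.Derives ([a] ++ l₁) ((b.map Symbol.terminal) ++ (l₂.flatten.map Symbol.terminal)) :=
        derives_append hab ih
      simpa using this

lemma ann_sound : ∀ {v : List (Symbol S G.NT)} {p : Q} {l : List Q} {os : List (List Δ)},
    l.length = v.length →
    List.Forall₂ (semS G tr q0 acc) (annotate v p l) os →
    ∃ ws : List (List S),
      List.Forall₂ (fun X w => G.Derives [X] (w.map Symbol.terminal)) v ws ∧
      TPath tr p (lastSt p l) ws.flatten os.flatten := by
  intro v
  induction v with
  | nil =>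
      intro p l os hlen h
      rw [List.length_nil, List.length_eq_zero_iff] at hlen
      subst hlen
      rw [show annotate ([] : List (Symbol S G.NT)) p ([] : List Q) = [] from rfl,
        List.forall₂_nil_left_iff] at h
      subst h
      exact ⟨[], List.Forall₂.nil, TPath.nil p⟩
  | cons X v ih =>
      intro p l os hlen h
      cases l with
      | nil => simp at hlen
      | cons s l =>
          rw [show annotate (X :: v) p (s :: l) = tri p X s :: annotate v s l from rfl,
            List.forall₂_cons_left_iff] at h
          obtain ⟨o₁, os', hsem, h', rfl⟩ := h
          obtain ⟨w₁, hpath, hder⟩ := hsem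
          obtain ⟨ws, hws, hpath'⟩ := ih (by simpa using hlen) h'
          exact ⟨w₁ :: ws, List.Forall₂.cons hder hws,
            by simpa using hpath.ttrans hpath'⟩

end Soundness
section Soundness2

set_option linter.unusedSectionVars false

variable {S Δ Q : Type} [Fintype S] {G : ContextFreeGrammar S} {st : Finset Q}
  {tr : Finset (TTrans Q S Δ)} {q0 : Q} {acc : Finset Q}

lemma flatten_of_terminals {out : List Δ} {u : List (List Δ)}
    (h : List.Forall₂ (semS G tr q0 acc) (out.map Symbol.terminal) u) : u.flatten = out := by
  induction out generalizing u with
  | nil => rw [List.map_nil, List.forall₂_nil_left_iff] at h; subst h; rfl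
  | cons d out ih =>
      rw [List.map_cons, List.forall₂_cons_left_iff] at h
      obtain ⟨b, u', hb, h', rfl⟩ := h
      have : b = [d] := hb
      subst this
      simp [ih h']

lemma rule_sound {r : ContextFreeRule Δ (NTt Q S G.NT)} {os : List (List Δ)}
    (hr : r ∈ bigRules G st tr q0 acc)
    (h : List.Forall₂ (semS G tr q0 acc) r.output os) :
    sem G tr q0 acc r.input os.flatten := by
  simp only [bigRules, Finset.mem_union] at hr
  rcases hr with ((((((hr | hr) | hr) | hr) | hr) | hr) | hr)
  · -- R1
    obtain ⟨qf, hqf, rfl⟩ := Finset.mem_image.mp hr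
    rw [List.forall₂_cons_left_iff] at h
    obtain ⟨o₁, os', ho₁, h', rfl⟩ := h
    rw [List.forall₂_nil_left_iff] at h'
    subst h'
    obtain ⟨w, hpath, hder⟩ := ho₁
    exact ⟨w, (G.mem_language_iff w).mpr hder, qf, hqf, by simpa using hpath⟩
  · -- R2
    rw [Finset.mem_biUnion] at hr
    obtain ⟨r', hr', hmem⟩ := hr
    obtain ⟨⟨p, l⟩, hpl, rfl⟩ := Finset.mem_image.mp hmem
    rw [Finset.mem_product] at hpl
    obtain ⟨hp, hl⟩ := hpl
    obtain ⟨hlen, -⟩ := mem_stLists.mp hl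
    obtain ⟨ws, hws, hpath⟩ := ann_sound G tr q0 acc hlen h
    refine ⟨ws.flatten, hpath, ?_⟩
    exact (ContextFreeGrammar.Produces.trans_derives
      ⟨r', hr', ContextFreeRule.Rewrites.input_output⟩ (derives_of_forall₂ G hws))
  · -- R3
    obtain ⟨⟨p, x, q⟩, -, rfl⟩ := Finset.mem_image.mp hr
    rw [List.forall₂_cons_left_iff] at h
    obtain ⟨o₁, os', ho₁, h', rfl⟩ := h
    rw [List.forall₂_nil_left_iff] at h'
    subst h'
    have hpath : TPath tr p q [x] o₁ := ho₁
    exact ⟨[x], by simpa using hpath, ContextFreeGrammar.Derives.refl _⟩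
  · -- R4
    obtain ⟨⟨t, q⟩, htq, rfl⟩ := Finset.mem_image.mp hr
    rw [Finset.mem_product, Finset.mem_filter] at htq
    obtain ⟨⟨ht, hnone⟩, -⟩ := htq
    obtain ⟨u, v, rfl, hu, hv⟩ := forall₂_append_split h
    rw [List.forall₂_cons_left_iff] at hv
    obtain ⟨o₂, os', ho₂, hv', rfl⟩ := hv
    rw [List.forall₂_nil_left_iff] at hv'
    subst hv'
    obtain ⟨w, hpath, hder⟩ := ho₂
    refine ⟨w, ?_, hder⟩
    have ht' : (t.1, none, t.2.2.1, t.2.2.2) ∈ tr := by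
      rw [← hnone]; simpa using ht
    have := TPath.cons t.1 none t.2.2.1 ht' hpath
    simpa [flatten_of_terminals hu] using this
  · -- R5a
    obtain ⟨⟨t, b, q⟩, htq, rfl⟩ := Finset.mem_image.mp hr
    rw [Finset.mem_product, Finset.mem_filter] at htq
    obtain ⟨⟨ht, hnone⟩, -⟩ := htq
    obtain ⟨u, v, rfl, hu, hv⟩ := forall₂_append_split h
    rw [List.forall₂_cons_left_iff] at hv
    obtain ⟨o₂, os', ho₂, hv', rfl⟩ := hv
    rw [List.forall₂_nil_left_iff] at hv'
    subst hv'
    have hpath : TPath tr t.2.2.2 q b.toList o₂ := ho₂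
    have ht' : (t.1, none, t.2.2.1, t.2.2.2) ∈ tr := by
      rw [← hnone]; simpa using ht
    have := TPath.cons t.1 none t.2.2.1 ht' hpath
    simpa [sem, flatten_of_terminals hu] using this
  · -- R5b
    obtain ⟨⟨t, q⟩, htq, rfl⟩ := Finset.mem_image.mp hr
    rw [Finset.mem_product] at htq
    obtain ⟨ht, -⟩ := htq
    obtain ⟨u, v, rfl, hu, hv⟩ := forall₂_append_split h
    rw [List.forall₂_cons_left_iff] at hv
    obtain ⟨o₂, os', ho₂, hv', rfl⟩ := hv
    rw [List.forall₂_nil_left_iff] at hv'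
    subst hv'
    have hpath : TPath tr t.2.2.2 q ([] : List S) o₂ := ho₂
    have ht' : (t.1, t.2.1, t.2.2.1, t.2.2.2) ∈ tr := ht
    have := TPath.cons t.1 t.2.1 t.2.2.1 ht' hpath
    simpa [sem, flatten_of_terminals hu] using this
  · -- R6
    obtain ⟨q, -, rfl⟩ := Finset.mem_image.mp hr
    rw [List.forall₂_nil_left_iff] at h
    subst h
    exact TPath.nil q

lemma sound_derives {s : List (Symbol Δ (NTt Q S G.NT))} {o : List Δ}
    (h : (bigGrammar G st tr q0 acc).Derives s (o.map Symbol.terminal)) :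
    semL G tr q0 acc s o := by
  induction h using Relation.ReflTransGen.head_induction_on with
  | refl =>
      refine ⟨o.map (fun d => [d]), ?_, by
        induction o with
        | nil => rfl
        | cons a o ih => simpa using ih⟩
      rw [List.forall₂_map_right_iff, List.forall₂_map_left_iff]
      exact List.forall₂_same.mpr (fun d _ => rfl)
  | head hstep _ ih =>
      obtain ⟨r, hr, hrw⟩ := hstep
      obtain ⟨pre, suf, rfl, rfl⟩ := hrw.exists_parts
      obtain ⟨os, hf, rfl⟩ := ih
      rw [List.append_assoc] at hf
      obtain ⟨os₁, rest, rfl, h₁, hrest⟩ := forall₂_append_split hf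
      obtain ⟨os₂, os₃, rfl, h₂, h₃⟩ := forall₂_append_split hrest
      refine ⟨os₁ ++ [os₂.flatten] ++ os₃, ?_, by simp⟩
      rw [List.append_assoc, List.append_assoc]
      exact List.rel_append h₁ (List.Forall₂.cons (rule_sound hr h₂) h₃)

end Soundness2
section Completeness

set_option linter.unusedSectionVars false

/-- State-annotated embedding of a sentential form. -/
inductive Emb {S Δ Q N : Type} (st : Finset Q) :
    List (Symbol S N) → Q → Q → List (Symbol Δ (NTt Q S N)) → Prop
  | nil (p : Q) : Emb st [] p p []
  | cons {xs : List (Symbol S N)} {q : Q} {e : List (Symbol Δ (NTt Q S N))}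
      (X : Symbol S N) (p s : Q) (hs : s ∈ st) (h : Emb st xs s q e) :
      Emb st (X :: xs) p q (tri p X s :: e)

namespace Emb

variable {S Δ Q N : Type} {st : Finset Q}

lemma append {u v : List (Symbol S N)} {p s q : Q} {e₁ e₂ : List (Symbol Δ (NTt Q S N))}
    (h₁ : Emb st u p s e₁) (h₂ : Emb st v s q e₂) : Emb st (u ++ v) p q (e₁ ++ e₂) := by
  induction h₁ with
  | nil => simpa using h₂
  | cons X p s hs h ih => exact Emb.cons X p s hs (ih h₂)

lemma split {u v : List (Symbol S N)} {p q : Q} {e : List (Symbol Δ (NTt Q S N))}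
    (h : Emb st (u ++ v) p q e) :
    ∃ s e₁ e₂, Emb st u p s e₁ ∧ Emb st v s q e₂ ∧ e = e₁ ++ e₂ ∧ (s ∈ st ∨ s = p) := by
  induction u generalizing p e with
  | nil => exact ⟨p, [], e, Emb.nil p, h, rfl, Or.inr rfl⟩
  | cons X u ih =>
      rw [List.cons_append] at h
      cases h with
      | cons _ _ s' hs' h' =>
          obtain ⟨s, e₁, e₂, h₁, h₂, rfl, hsor⟩ := ih h'
          refine ⟨s, tri p X s' :: e₁, e₂, Emb.cons X p s' hs' h₁, h₂, rfl, Or.inl ?_⟩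
          rcases hsor with hs | rfl
          · exact hs
          · exact hs'

lemma to_annotate {v : List (Symbol S N)} {p q : Q} {e : List (Symbol Δ (NTt Q S N))}
    (h : Emb st v p q e) :
    ∃ l, l ∈ stLists st v.length ∧ e = annotate v p l ∧ q = lastSt p l := by
  induction h with
  | nil => exact ⟨[], by simp [stLists], rfl, rfl⟩
  | cons X p s hs h ih =>
      obtain ⟨l, hl, rfl, rfl⟩ := ih
      obtain ⟨hlen, hmem⟩ := mem_stLists.mp hl
      refine ⟨s :: l, mem_stLists.mpr ⟨by simp [hlen], ?_⟩, rfl, by simp⟩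
      intro y hy
      rcases List.mem_cons.mp hy with rfl | hy
      · exact hs
      · exact hmem y hy

end Emb

variable {S Δ Q : Type} [Fintype S] {G : ContextFreeGrammar S} {st : Finset Q}
  {tr : Finset (TTrans Q S Δ)} {q0 : Q} {acc : Finset Q}

lemma rule2_mem {r' : ContextFreeRule S G.NT} (hr' : r' ∈ G.rules) {p q : Q}
    {e : List (Symbol Δ (NTt Q S G.NT))} (hp : p ∈ st) (h : Emb st r'.output p q e) :
    (⟨some (Sum.inl (p, Symbol.nonterminal r'.input, q)), e⟩ :
      ContextFreeRule Δ (NTt Q S G.NT)) ∈ bigRules G st tr q0 acc := by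
  obtain ⟨l, hl, rfl, rfl⟩ := h.to_annotate
  simp only [bigRules, Finset.mem_union]
  refine Or.inl (Or.inl (Or.inl (Or.inl (Or.inl (Or.inr ?_)))))
  rw [Finset.mem_biUnion]
  exact ⟨r', hr', Finset.mem_image.mpr ⟨(p, l), Finset.mem_product.mpr ⟨hp, hl⟩, rfl⟩⟩

lemma claim1 {A : G.NT} {v : List (Symbol S G.NT)}
    (hder : G.Derives [Symbol.nonterminal A] v) :
    ∀ {p q : Q} {e : List (Symbol Δ (NTt Q S G.NT))}, p ∈ st → Emb st v p q e →
      (bigGrammar G st tr q0 acc).Derives [tri p (Symbol.nonterminal A) q] e := by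
  induction hder with
  | refl =>
      intro p q e hp h
      cases h with
      | cons _ _ s hs h' =>
          cases h'
          exact ContextFreeGrammar.Derives.refl _
  | tail hd hp ih =>
      intro p q e hpst hemb
      obtain ⟨r, hr, hrw⟩ := hp
      obtain ⟨a, b, rfl, rfl⟩ := hrw.exists_parts
      obtain ⟨sB, eAB, e₃, hAB, h₃, rfl, hsB⟩ := hemb.split
      obtain ⟨s₁, e₁, e₂, h₁, h₂, rfl, hs₁⟩ := hAB.split
      have hs₁st : s₁ ∈ st := by rcases hs₁ with h | rfl; exacts [h, hpst]
      have hsBst : sB ∈ st := by rcases hsB with h | rfl; exacts [h, hpst]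
      have hembu : Emb st (a ++ [Symbol.nonterminal r.input] ++ b) p q
          ((e₁ ++ [tri s₁ (Symbol.nonterminal r.input) sB]) ++ e₃) :=
        (h₁.append (Emb.cons _ s₁ sB hsBst (Emb.nil sB))).append h₃
      have ihd := ih hpst hembu
      refine ihd.trans_produces ⟨⟨some (Sum.inl (s₁, Symbol.nonterminal r.input, sB)), e₂⟩,
        rule2_mem hr hs₁st h₂, ?_⟩
      have := ContextFreeRule.rewrites_of_exists_parts
        (⟨some (Sum.inl (s₁, Symbol.nonterminal r.input, sB)), e₂⟩ :
          ContextFreeRule Δ (NTt Q S G.NT)) e₁ e₃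
      simpa [tri] using this

lemma claimW (hst : ∀ t ∈ tr, t.1 ∈ st ∧ t.2.2.2 ∈ st) {p q : Q} {w : List S} {o : List Δ}
    (hq : q ∈ st) (h : TPath tr p q w o) : ∀ {b : Option S}, w = b.toList →
    (bigGrammar G st tr q0 acc).Derives [wnt p b q] (o.map Symbol.terminal) := by
  induction h with
  | nil =>
      rintro b hb
      cases b with
      | none =>
          rename_i p
          refine ContextFreeGrammar.Produces.single ⟨⟨some (Sum.inr (p, none, p)), [] ⟩, ?_, ?_⟩
          · show _ ∈ bigRules G st tr q0 acc
            simp only [bigRules, Finset.mem_union]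
            exact Or.inr (Finset.mem_image.mpr ⟨_, hq, rfl⟩)
          · exact ContextFreeRule.Rewrites.input_output
      | some x => simp at hb
  | @cons q' qf w o p b' out ht hp ih =>
      rintro b hb
      cases b' with
      | none =>
          simp only [Option.toList, List.nil_append] at hb
          have hmem : (⟨some (Sum.inr (p, b, qf)),
              (out.map Symbol.terminal) ++ [wnt q' b qf]⟩ :
              ContextFreeRule Δ (NTt Q S G.NT)) ∈ bigRules G st tr q0 acc := by
            simp only [bigRules, Finset.mem_union]
            refine Or.inl (Or.inl (Or.inr (Finset.mem_image.mpr
              ⟨((p, none, out, q'), (b, qf)), ?_, rfl⟩)))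
            rw [Finset.mem_product, Finset.mem_filter]
            exact ⟨⟨ht, rfl⟩, Finset.mem_product.mpr ⟨Finset.mem_univ _, hq⟩⟩
          have hstep : (bigGrammar G st tr q0 acc).Produces [wnt p b qf]
              ((out.map Symbol.terminal) ++ [wnt q' b qf]) :=
            ⟨_, hmem, ContextFreeRule.Rewrites.input_output⟩
          refine hstep.trans_derives ?_
          have := (ih hq hb).append_left (out.map Symbol.terminal)
          simpa using this
      | some x =>
          cases b with
          | none => simp at hb
          | some y =>
              simp only [Option.toList, List.singleton_append, List.cons.injEq] at hb
              obtain ⟨rfl, hw⟩ := hb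
              have hmem : (⟨some (Sum.inr (p, some x, qf)),
                  (out.map Symbol.terminal) ++ [wnt q' none qf]⟩ :
                  ContextFreeRule Δ (NTt Q S G.NT)) ∈ bigRules G st tr q0 acc := by
                simp only [bigRules, Finset.mem_union]
                refine Or.inl (Or.inr (Finset.mem_image.mpr ⟨((p, some x, out, q'), qf), ?_, rfl⟩))
                exact Finset.mem_product.mpr ⟨ht, hq⟩
              have hstep : (bigGrammar G st tr q0 acc).Produces [wnt p (some x) qf]
                  ((out.map Symbol.terminal) ++ [wnt q' none qf]) :=
                ⟨_, hmem, ContextFreeRule.Rewrites.input_output⟩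
              refine hstep.trans_derives ?_
              have h2 := ih hq (b := none) (by simp [hw])
              have := h2.append_left (out.map Symbol.terminal)
              simpa using this

end Completeness
section Assemble

set_option linter.unusedSectionVars false

variable {S Δ Q : Type} [Fintype S] {G : ContextFreeGrammar S} {st : Finset Q}
  {tr : Finset (TTrans Q S Δ)} {q0 : Q} {acc : Finset Q}

lemma pad {p q : Q} {w : List S} {o : List Δ} (hq : q ∈ st) (h : TPath tr p q w o)
    (hw : w = []) :
    (bigGrammar G st tr q0 acc).Derives [tri p (Symbol.nonterminal G.initial) q]
      ((o.map Symbol.terminal) ++ [tri q (Symbol.nonterminal G.initial) q]) := by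
  induction h with
  | nil => simpa using ContextFreeGrammar.Derives.refl _
  | @cons q' qf w o p b out ht hp ih =>
      cases b with
      | some x => simp at hw
      | none =>
          simp only [Option.toList, List.nil_append] at hw
          have hmem : (⟨some (Sum.inl (p, Symbol.nonterminal G.initial, qf)),
              (out.map Symbol.terminal) ++ [tri q' (Symbol.nonterminal G.initial) qf]⟩ :
              ContextFreeRule Δ (NTt Q S G.NT)) ∈ bigRules G st tr q0 acc := by
            simp only [bigRules, Finset.mem_union]
            refine Or.inl (Or.inl (Or.inl (Or.inr (Finset.mem_image.mpr
              ⟨((p, none, out, q'), qf), ?_, rfl⟩))))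
            rw [Finset.mem_product, Finset.mem_filter]
            exact ⟨⟨ht, rfl⟩, hq⟩
          have hstep : (bigGrammar G st tr q0 acc).Produces
              [tri p (Symbol.nonterminal G.initial) qf]
              ((out.map Symbol.terminal) ++ [tri q' (Symbol.nonterminal G.initial) qf]) :=
            ⟨_, hmem, ContextFreeRule.Rewrites.input_output⟩
          refine hstep.trans_derives ?_
          have := (ih hq hw).append_left (out.map Symbol.terminal)
          simpa using this

lemma single_block (hst : ∀ t ∈ tr, t.1 ∈ st ∧ t.2.2.2 ∈ st) {p q : Q} {x : S} {o : List Δ}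
    (hp : p ∈ st) (hq : q ∈ st) (h : TPath tr p q [x] o) :
    (bigGrammar G st tr q0 acc).Derives [tri p (Symbol.terminal x) q]
      (o.map Symbol.terminal) := by
  have hmem : (⟨some (Sum.inl (p, Symbol.terminal x, q)), [wnt p (some x) q]⟩ :
      ContextFreeRule Δ (NTt Q S G.NT)) ∈ bigRules G st tr q0 acc := by
    simp only [bigRules, Finset.mem_union]
    refine Or.inl (Or.inl (Or.inl (Or.inl (Or.inr (Finset.mem_image.mpr
      ⟨(p, x, q), ?_, rfl⟩)))))
    rw [Finset.mem_product, Finset.mem_product]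
    exact ⟨hp, Finset.mem_univ _, hq⟩
  have hstep : (bigGrammar G st tr q0 acc).Produces [tri p (Symbol.terminal x) q]
      [wnt p (some x) q] := ⟨_, hmem, ContextFreeRule.Rewrites.input_output⟩
  exact hstep.trans_derives (claimW hst hq h rfl)

lemma blocks (hst : ∀ t ∈ tr, t.1 ∈ st ∧ t.2.2.2 ∈ st) {w : List S} :
    ∀ {p q : Q} {o : List Δ}, TPath tr p q w o → w ≠ [] → p ∈ st →
    ∃ e, Emb st (w.map Symbol.terminal) p q e ∧
      (bigGrammar G st tr q0 acc).Derives e (o.map Symbol.terminal) := by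
  induction w with
  | nil => intro _ _ _ _ hne _; exact absurd rfl hne
  | cons x w ih =>
      intro p q o h _ hp
      cases w with
      | nil =>
          have hq : q ∈ st := h.mem_st hst hp
          exact ⟨[tri p (Symbol.terminal x) q], Emb.cons _ p q hq (Emb.nil q),
            by simpa using single_block hst hp hq h⟩
      | cons y w' =>
          have h' : TPath tr p q ([x] ++ (y :: w')) o := by simpa using h
          obtain ⟨s, o₁, o₂, h₁, h₂, rfl⟩ := h'.split
          have hs : s ∈ st := h₁.mem_st hst hp
          obtain ⟨e₂, hemb₂, hder₂⟩ := ih h₂ (by simp) hs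
          refine ⟨tri p (Symbol.terminal x) s :: e₂, Emb.cons _ p s hs hemb₂, ?_⟩
          have := derives_append (single_block hst hp hs h₁) hder₂
          simpa using this

set_option maxHeartbeats 800000 in
/-- Main simulation theorem: the language of the big grammar. -/
lemma bigGrammar_language (hst : ∀ t ∈ tr, t.1 ∈ st ∧ t.2.2.2 ∈ st)
    (hq0 : q0 ∈ st) (hacc : ∀ q ∈ acc, q ∈ st) :
    (bigGrammar G st tr q0 acc).language =
      {o : List Δ | ∃ w ∈ G.language, ∃ qf ∈ acc, TPath tr q0 qf w o} := by
  ext o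
  constructor
  · intro h
    have hder : (bigGrammar G st tr q0 acc).Derives
        [Symbol.nonterminal ((bigGrammar G st tr q0 acc).initial)] (o.map Symbol.terminal) := h
    have hsem := sound_derives hder
    obtain ⟨os, hf, rfl⟩ := hsem
    rw [List.forall₂_cons_left_iff] at hf
    obtain ⟨o₁, os', ho₁, hf', rfl⟩ := hf
    rw [List.forall₂_nil_left_iff] at hf'
    subst hf'
    have : sem G tr q0 acc none o₁ := ho₁
    simp only [List.flatten_cons, List.flatten_nil, List.append_nil]
    exact this
  · rintro ⟨w, hw, qf, hqf, hpath⟩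
    have hmem : (⟨none, [tri q0 (Symbol.nonterminal G.initial) qf]⟩ :
        ContextFreeRule Δ (NTt Q S G.NT)) ∈ bigRules G st tr q0 acc := by
      simp only [bigRules, Finset.mem_union]
      exact Or.inl (Or.inl (Or.inl (Or.inl (Or.inl (Or.inl
        (Finset.mem_image.mpr ⟨qf, hqf, rfl⟩))))))
    have hstep : (bigGrammar G st tr q0 acc).Produces
        [Symbol.nonterminal ((bigGrammar G st tr q0 acc).initial)]
        [tri q0 (Symbol.nonterminal G.initial) qf] :=
      ⟨_, hmem, ContextFreeRule.Rewrites.input_output⟩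
    show (bigGrammar G st tr q0 acc).Derives _ _
    refine hstep.trans_derives ?_
    rcases eq_or_ne w [] with rfl | hne
    · have hpad := pad (G := G) (q0 := q0) (acc := acc) (hacc qf hqf) hpath rfl
      refine hpad.trans ?_
      have hd : G.Derives [Symbol.nonterminal G.initial] ([] : List (Symbol S G.NT)) := hw
      have := (claim1 (st := st) (tr := tr) (q0 := q0) (acc := acc) hd (hacc qf hqf)
        (Emb.nil qf)).append_left (o.map Symbol.terminal)
      simpa using this
    · obtain ⟨e, hemb, hder⟩ := blocks hst hpath hne hq0
      have hd : G.Derives [Symbol.nonterminal G.initial] (w.map Symbol.terminal) := hw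
      exact (claim1 hd hq0 hemb).trans hder

/-- Lemma B: applying a (normalized) rational transducer to a context-free language
yields a context-free language. -/
lemma lemmaB {Q : Type} (G : ContextFreeGrammar.{0} S) (st : Finset Q)
    (tr : Finset (TTrans Q S Δ)) (q0 : Q) (acc : Finset Q)
    (hst : ∀ t ∈ tr, t.1 ∈ st ∧ t.2.2.2 ∈ st) (hq0 : q0 ∈ st) (hacc : ∀ q ∈ acc, q ∈ st) :
    Language.IsContextFree
      {o : List Δ | ∃ w ∈ G.language, ∃ qf ∈ acc, TPath tr q0 qf w o} :=
  ⟨bigGrammar G st tr q0 acc, bigGrammar_language hst hq0 hacc⟩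

end Assemble
section LemmaA

set_option linter.unusedSectionVars false

variable {Γ S Δ : Type} [Fintype Γ] {Q : Type} [Fintype Q]
  (f : FreeMonoid Γ →* FreeMonoid S) (g : FreeMonoid Γ →* FreeMonoid Δ) (M : DFA Γ Q)

/-- Suffixes of images of letters under `f`, plus the empty word. -/
def suffixesF : Finset (List S) :=
  insert [] (Finset.univ.biUnion fun γ : Γ =>
    ((FreeMonoid.toList (f (FreeMonoid.of γ))).tails).toFinset)

lemma nil_mem_suffixesF : ([] : List S) ∈ suffixesF f := Finset.mem_insert_self _ _

lemma self_mem_suffixesF (γ : Γ) : FreeMonoid.toList (f (FreeMonoid.of γ)) ∈ suffixesF f := by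
  refine Finset.mem_insert_of_mem (Finset.mem_biUnion.mpr ⟨γ, Finset.mem_univ _, ?_⟩)
  rw [List.mem_toFinset, List.mem_tails]

lemma tail_mem_suffixesF {l : List S} (h : l ∈ suffixesF f) : l.tail ∈ suffixesF f := by
  rcases Finset.mem_insert.mp h with rfl | h
  · exact nil_mem_suffixesF f
  · obtain ⟨γ, -, hγ⟩ := Finset.mem_biUnion.mp h
    rw [List.mem_toFinset, List.mem_tails] at hγ
    refine Finset.mem_insert_of_mem (Finset.mem_biUnion.mpr ⟨γ, Finset.mem_univ _, ?_⟩)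
    rw [List.mem_toFinset, List.mem_tails]
    exact (List.tail_suffix l).trans hγ

/-- The states of the transducer obtained from `f`, `g` and a DFA. -/
def stA : Finset (Q × List S) := Finset.univ ×ˢ suffixesF f

/-- The transitions of the transducer obtained from `f`, `g` and a DFA : "load" a letter `γ`
(silently outputting `g γ` and owing the input `f γ`) or "emit" an owed input letter. -/
def trA : Finset (TTrans (Q × List S) S Δ) :=
  ((Finset.univ : Finset (Q × Γ)).image fun pγ =>
      ((pγ.1, ([] : List S)), none, FreeMonoid.toList (g (FreeMonoid.of pγ.2)),
        (M.step pγ.1 pγ.2, FreeMonoid.toList (f (FreeMonoid.of pγ.2)))))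
  ∪ (((Finset.univ : Finset Q) ×ˢ suffixesF f).image fun pl =>
      ((pl.1, pl.2), pl.2.head?, ([] : List Δ), (pl.1, pl.2.tail)))

lemma trA_closed : ∀ t ∈ trA f g M, t.1 ∈ stA f ∧ t.2.2.2 ∈ stA f := by
  intro t ht
  rcases Finset.mem_union.mp ht with h | h
  · obtain ⟨⟨p, γ⟩, -, rfl⟩ := Finset.mem_image.mp h
    exact ⟨Finset.mem_product.mpr ⟨Finset.mem_univ _, nil_mem_suffixesF f⟩,
      Finset.mem_product.mpr ⟨Finset.mem_univ _, self_mem_suffixesF f γ⟩⟩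
  · obtain ⟨⟨p, l⟩, hpl, rfl⟩ := Finset.mem_image.mp h
    obtain ⟨-, hl⟩ := Finset.mem_product.mp hpl
    exact ⟨Finset.mem_product.mpr ⟨Finset.mem_univ _, hl⟩,
      Finset.mem_product.mpr ⟨Finset.mem_univ _, tail_mem_suffixesF f hl⟩⟩

lemma emitAll {l : List S} (hl : l ∈ suffixesF f) (p : Q) :
    TPath (trA f g M) (p, l) (p, []) l [] := by
  induction l with
  | nil => exact TPath.nil _
  | cons x l ih =>
      have ht : ((p, x :: l), some x, ([] : List Δ), (p, l)) ∈ trA f g M := by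
        refine Finset.mem_union_right _ (Finset.mem_image.mpr
          ⟨(p, x :: l), Finset.mem_product.mpr ⟨Finset.mem_univ _, hl⟩, rfl⟩)
      have := TPath.cons (p, x :: l) (some x) [] ht (ih (by simpa using tail_mem_suffixesF f hl))
      simpa using this

lemma loadOne (p : Q) (γ : Γ) :
    TPath (trA f g M) (p, []) (M.step p γ, [])
      (FreeMonoid.toList (f (FreeMonoid.of γ))) (FreeMonoid.toList (g (FreeMonoid.of γ))) := by
  have ht : ((p, ([] : List S)), none, FreeMonoid.toList (g (FreeMonoid.of γ)),
      (M.step p γ, FreeMonoid.toList (f (FreeMonoid.of γ)))) ∈ trA f g M :=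
    Finset.mem_union_left _ (Finset.mem_image.mpr ⟨(p, γ), Finset.mem_univ _, rfl⟩)
  have := TPath.cons _ none _ ht (emitAll f g M (self_mem_suffixesF f γ) (M.step p γ))
  simpa using this

lemma pathOfWord : ∀ (r : List Γ) (p : Q),
    TPath (trA f g M) (p, []) (M.evalFrom p r, [])
      (FreeMonoid.toList (f (FreeMonoid.ofList r))) (FreeMonoid.toList (g (FreeMonoid.ofList r)))
  | [], p => by simpa using TPath.nil ((p, []) : Q × List S)
  | γ :: r, p => by
      have h1 := loadOne f g M p γ
      have h2 := pathOfWord r (M.step p γ)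
      have := h1.ttrans h2
      simpa [← FreeMonoid.toList_mul] using this

lemma pathToWord : ∀ {a tgt : Q × List S} {w : List S} {o : List Δ},
    TPath (trA f g M) a tgt w o → ∀ q : Q, tgt = (q, []) →
    ∃ r : List Γ, M.evalFrom a.1 r = q ∧
      a.2 ++ FreeMonoid.toList (f (FreeMonoid.ofList r)) = w ∧
      FreeMonoid.toList (g (FreeMonoid.ofList r)) = o := by
  intro a tgt w o h
  induction h with
  | nil =>
      rintro q rfl
      exact ⟨[], rfl, by simp, by simp⟩
  | @cons mid tgt w' o' p b out ht hp ih =>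
      rintro q rfl
      rcases Finset.mem_union.mp ht with hmem | hmem
      · obtain ⟨⟨p₁, γ⟩, -, heq⟩ := Finset.mem_image.mp hmem
        simp only [Prod.mk.injEq] at heq
        obtain ⟨h1, h2, h3, h4⟩ := heq
        obtain ⟨r, hr1, hr2, hr3⟩ := ih q rfl
        refine ⟨γ :: r, ?_, ?_, ?_⟩
        · rw [← h1]; simpa [← h4] using hr1
        · rw [← h1, ← h2]
          simp only [Option.toList, List.nil_append]
          rw [show FreeMonoid.ofList (γ :: r) = FreeMonoid.of γ * FreeMonoid.ofList r from rfl,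
            map_mul, FreeMonoid.toList_mul]
          rw [← h4] at hr2
          exact hr2
        · rw [← h3]
          rw [show FreeMonoid.ofList (γ :: r) = FreeMonoid.of γ * FreeMonoid.ofList r from rfl,
            map_mul, FreeMonoid.toList_mul, hr3]
      · obtain ⟨⟨p₁, l₁⟩, -, heq⟩ := Finset.mem_image.mp hmem
        simp only [Prod.mk.injEq] at heq
        obtain ⟨h1, h2, h3, h4⟩ := heq
        obtain ⟨r, hr1, hr2, hr3⟩ := ih q rfl
        rw [← h4] at hr1 hr2
        refine ⟨r, ?_, ?_, ?_⟩
        · rw [← h1]; exact hr1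
        · rw [← h1, ← h2]
          cases l₁ with
          | nil => simpa using hr2
          | cons x l₁ => simpa using hr2
        · rw [← h3, hr3]; simp

end LemmaA
/-- Theorem 6.2 (for context-free languages): the family of context-free languages is
closed under rational transduction.  The rational transduction `Σ* → Δ*` is presented
as `{(f(r), g(r)) | r ∈ R}` for homomorphisms `f : Γ* → Σ*`, `g : Γ* → Δ*` and a
regular language `R ⊆ Γ*`. -/
theorem contextFree_image_rational_transduction {Γ S Δ : Type}
    [Fintype Γ] [Fintype S] [Fintype Δ]
    (f : FreeMonoid Γ →* FreeMonoid S) (g : FreeMonoid Γ →* FreeMonoid Δ)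
    (R : Language Γ) (hR : R.IsRegular) (L : Language S) (hL : L.IsContextFree) :
    Language.IsContextFree
      {w : List Δ | ∃ r ∈ R, FreeMonoid.toList (f (FreeMonoid.ofList r)) ∈ L ∧
        FreeMonoid.toList (g (FreeMonoid.ofList r)) = w} := by
  obtain ⟨Q, _, M, rfl⟩ := hR
  obtain ⟨G, rfl⟩ := hL
  set acc : Finset (Q × List S) :=
    (Set.toFinite M.accept).toFinset.image (fun q => (q, ([] : List S))) with hacc_def
  have key : {w : List Δ | ∃ r ∈ M.accepts, FreeMonoid.toList (f (FreeMonoid.ofList r)) ∈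
        G.language ∧ FreeMonoid.toList (g (FreeMonoid.ofList r)) = w} =
      {o : List Δ | ∃ w ∈ G.language, ∃ qf ∈ acc, TPath (trA f g M) (M.start, []) qf w o} := by
    ext o
    simp only [Set.mem_setOf_eq]
    constructor
    · rintro ⟨r, hr, hfL, rfl⟩
      refine ⟨_, hfL, (M.evalFrom M.start r, []), ?_, pathOfWord f g M r M.start⟩
      refine Finset.mem_image.mpr ⟨_, (Set.Finite.mem_toFinset _).mpr ?_, rfl⟩
      exact (DFA.mem_accepts M).mp hr
    · rintro ⟨w, hw, qf, hqf, hpath⟩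
      obtain ⟨q, hq, rfl⟩ := Finset.mem_image.mp hqf
      obtain ⟨r, hr1, hr2, hr3⟩ := pathToWord f g M hpath q rfl
      simp only [List.nil_append] at hr2
      refine ⟨r, ?_, by rwa [hr2], hr3⟩
      rw [DFA.mem_accepts]
      show M.evalFrom M.start r ∈ M.accept
      rw [hr1]
      exact (Set.Finite.mem_toFinset _).mp hq
  rw [key]
  refine lemmaB G (stA f) (trA f g M) (M.start, []) acc (trA_closed f g M) ?_ ?_
  · exact Finset.mem_product.mpr ⟨Finset.mem_univ _, nil_mem_suffixesF f⟩
  · intro q hq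
    obtain ⟨q', -, rfl⟩ := Finset.mem_image.mp hq
    exact Finset.mem_product.mpr ⟨Finset.mem_univ _, nil_mem_suffixesF f⟩
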